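/- Fundamental Lemma (one direction): if (u_d, d_d, y_d) is a length-T trajectory of a controllable LTI system of order n, and col(u_d, d_d) is persistently exciting of order N + n, then the map g ↦ (H_N(u_d) g, H_N(d_d) g, H_N(y_d) g) is surjective onto the set of all length-N trajectories of the system; i.e., every length-N trajectory (u, d, y) satisfies col(H_N(u_d), H_N(d_d), H_N(y_d)) g = col(u, d, y) for some g. -/

import Mathlib

/-- The Hankel matrix of depth `L` with `cols` columns built from the signal `z`. -/
def Hankel {ι : Type*} (z : ℕ → ι → ℝ) (L cols : ℕ) :
    Matrix (Fin L × ι) (Fin cols) ℝ :=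
  fun ir j => z (ir.1 + j) ir.2

/-- `(u, d, y)` is a length-`N` trajectory of the LTI system
`x(t+1) = A x(t) + B u(t) + B_d d(t)`, `y(t) = C x(t) + D u(t)`. -/
def IsTraj {n m q p : ℕ} (A : Matrix (Fin n) (Fin n) ℝ) (B : Matrix (Fin n) (Fin m) ℝ)
    (Bd : Matrix (Fin n) (Fin q) ℝ) (C : Matrix (Fin p) (Fin n) ℝ)
    (D : Matrix (Fin p) (Fin m) ℝ) (N : ℕ)
    (u : ℕ → Fin m → ℝ) (d : ℕ → Fin q → ℝ) (y : ℕ → Fin p → ℝ) : Prop :=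
  ∃ x : ℕ → Fin n → ℝ,
    (∀ t, t + 1 < N → x (t + 1) = A.mulVec (x t) + B.mulVec (u t) + Bd.mulVec (d t)) ∧
    (∀ t, t < N → y t = C.mulVec (x t) + D.mulVec (u t))

open Matrix Finset
set_option linter.unusedSectionVars false

section aux
variable {ι κ : Type*} [Fintype ι] [Fintype κ] [DecidableEq ι] [DecidableEq κ]

lemma rank_full_surj (M : Matrix ι κ ℝ) (h : M.rank = Fintype.card ι) :
    ∀ b : ι → ℝ, ∃ v : κ → ℝ, M.mulVec v = b := by
  intro b
  have hrange : LinearMap.range M.mulVecLin = ⊤ := by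
    apply Submodule.eq_top_of_finrank_eq
    rw [Module.finrank_fintype_fun_eq_card]
    exact h
  have : b ∈ LinearMap.range M.mulVecLin := by rw [hrange]; trivial
  obtain ⟨v, hv⟩ := this
  exact ⟨v, hv⟩

lemma left_ker_zero (M : Matrix ι κ ℝ) (h : M.rank = Fintype.card ι) :
    ∀ v, Matrix.vecMul v M = 0 → v = 0 := by
  intro v hv
  have h1 : Mᵀ.rank = Fintype.card ι := by rw [Matrix.rank_transpose]; exact h
  have h2 : Module.finrank ℝ (LinearMap.ker Mᵀ.mulVecLin) = 0 := by
    have h3 := LinearMap.finrank_range_add_finrank_ker (Mᵀ.mulVecLin)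
    rw [Module.finrank_fintype_fun_eq_card] at h3
    have : Module.finrank ℝ (LinearMap.range Mᵀ.mulVecLin) = Fintype.card ι := h1
    omega
  have h4 : LinearMap.ker Mᵀ.mulVecLin = ⊥ := Submodule.finrank_eq_zero.mp h2
  have h5 : Mᵀ.mulVecLin v = 0 := by
    rw [Matrix.mulVecLin_apply, Matrix.mulVec_transpose]; exact hv
  have := LinearMap.ker_eq_bot.mp h4 (by simpa using h5 : Mᵀ.mulVecLin v = Mᵀ.mulVecLin 0)
  simpa using this

lemma surj_of_left_ker (M : Matrix ι κ ℝ) (h : ∀ v, Matrix.vecMul v M = 0 → v = 0) :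
    ∀ b : ι → ℝ, ∃ v : κ → ℝ, M.mulVec v = b := by
  apply rank_full_surj
  have hker : LinearMap.ker Mᵀ.mulVecLin = ⊥ := by
    rw [Submodule.eq_bot_iff]
    intro v hv
    exact h v (by rw [← Matrix.mulVec_transpose]; exact hv)
  have h2 : Module.finrank ℝ (LinearMap.ker Mᵀ.mulVecLin) = 0 := by
    rw [hker]; simp
  have h3 := LinearMap.finrank_range_add_finrank_ker (Mᵀ.mulVecLin)
  rw [Module.finrank_fintype_fun_eq_card, h2] at h3
  rw [← Matrix.rank_transpose]
  show Module.finrank ℝ (LinearMap.range Mᵀ.mulVecLin) = _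
  omega

end aux

-- helper sum lemmas
lemma sum_mul_mulVec {a b : ℕ} (v : Fin a → ℝ) (M : Matrix (Fin a) (Fin b) ℝ) (z : Fin b → ℝ) :
    ∑ i, v i * M.mulVec z i = ∑ j, Matrix.vecMul v M j * z j := by
  have := Matrix.dotProduct_mulVec v M z
  simpa [dotProduct] using this

lemma mulVec_sum_comm {a b c : ℕ} (M : Matrix (Fin a) (Fin b) ℝ) (z : Fin c → Fin b → ℝ)
    (g : Fin c → ℝ) (i : Fin a) :
    ∑ j, M.mulVec (z j) i * g j = M.mulVec (fun i' => ∑ j, z j i' * g j) i := by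
  simp only [Matrix.mulVec, dotProduct, Finset.sum_mul, Finset.mul_sum]
  rw [Finset.sum_comm]
  apply Finset.sum_congr rfl
  intro j _
  apply Finset.sum_congr rfl
  intro i' _
  ring

def cc {n m q : ℕ} (N : ℕ) (A : Matrix (Fin n) (Fin n) ℝ) (B : Matrix (Fin n) (Fin m) ℝ)
    (Bd : Matrix (Fin n) (Fin q) ℝ) (ξ : Fin n → ℝ) (η : Fin N × (Fin m ⊕ Fin q) → ℝ)
    (k l : ℕ) (r : Fin m ⊕ Fin q) : ℝ :=
  if l < k then Matrix.vecMul ξ (A ^ (k - 1 - l) * Matrix.fromCols B Bd) r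
  else if h : l - k < N then η (⟨l - k, h⟩, r) else 0

variable {n m q : ℕ} {N : ℕ} {A : Matrix (Fin n) (Fin n) ℝ} {B : Matrix (Fin n) (Fin m) ℝ}
    {Bd : Matrix (Fin n) (Fin q) ℝ} {ξ : Fin n → ℝ} {η : Fin N × (Fin m ⊕ Fin q) → ℝ}

lemma cc_lt {k l : ℕ} (h : l < k) (r) :
    cc N A B Bd ξ η k l r = Matrix.vecMul ξ (A ^ (k - 1 - l) * Matrix.fromCols B Bd) r := by
  simp [cc, h]

lemma cc_mid {k l : ℕ} (h : ¬ l < k) (h2 : l - k < N) (r) :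
    cc N A B Bd ξ η k l r = η (⟨l - k, h2⟩, r) := by
  simp [cc, h, h2]

lemma cc_ge {k l : ℕ} (h : N + k ≤ l) (r) : cc N A B Bd ξ η k l r = 0 := by
  have h1 : ¬ l < k := by omega
  have h2 : ¬ l - k < N := by omega
  simp [cc, h1, h2]

lemma cc_shift (k l : ℕ) (r) : cc N A B Bd ξ η (k+1) (l+1) r = cc N A B Bd ξ η k l r := by
  unfold cc
  rcases lt_or_ge l k with h | h
  · rw [if_pos (by omega), if_pos h]
    congr 3
    omega
  · rw [if_neg (by omega), if_neg (by omega)]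
    have he : l + 1 - (k+1) = l - k := by omega
    simp_rw [he]

lemma keyG {T : ℕ}
    (ud : ℕ → Fin m → ℝ) (dd : ℕ → Fin q → ℝ) (xd : ℕ → Fin n → ℝ)
    (hN : 0 < N)
    (hxd : ∀ t, t + 1 < T → xd (t+1) = A.mulVec (xd t) + B.mulVec (ud t) + Bd.mulVec (dd t))
    (hcol : ∀ j, j + N ≤ T →
      (∑ i, ξ i * xd j i) + ∑ l ∈ Finset.range N, ∑ r,
        cc N A B Bd ξ η 0 l r * Sum.elim (ud (j+l)) (dd (j+l)) r = 0) :
    ∀ k, ∀ j, j + N + k ≤ T →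
      (∑ i, Matrix.vecMul ξ (A ^ k) i * xd j i)
        + ∑ l ∈ Finset.range (N + k), ∑ r,
            cc N A B Bd ξ η k l r * Sum.elim (ud (j+l)) (dd (j+l)) r = 0 := by
  intro k
  induction k with
  | zero =>
    intro j hj
    simpa [Matrix.vecMul_one] using hcol j (by omega)
  | succ k IH =>
    intro j hj
    have h1 := IH (j+1) (by omega)
    rw [hxd j (by omega)] at h1
    set v : Fin n → ℝ := Matrix.vecMul ξ (A ^ k) with hv
    have e1 : ∑ i, v i * (A.mulVec (xd j) + B.mulVec (ud j) + Bd.mulVec (dd j)) i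
        = (∑ i, Matrix.vecMul ξ (A ^ (k+1)) i * xd j i)
          + ((∑ r, Matrix.vecMul v B r * ud j r) + (∑ r, Matrix.vecMul v Bd r * dd j r)) := by
      simp only [Pi.add_apply, mul_add, Finset.sum_add_distrib]
      rw [sum_mul_mulVec, sum_mul_mulVec, sum_mul_mulVec]
      rw [pow_succ, ← Matrix.vecMul_vecMul, hv]
      ring
    rw [e1] at h1
    rw [show N + (k+1) = (N+k)+1 from rfl, Finset.sum_range_succ']
    have e5 : ∑ l ∈ Finset.range (N+k), ∑ r,
        cc N A B Bd ξ η (k+1) (l+1) r * Sum.elim (ud (j+(l+1))) (dd (j+(l+1))) r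
        = ∑ l ∈ Finset.range (N+k), ∑ r,
            cc N A B Bd ξ η k l r * Sum.elim (ud ((j+1)+l)) (dd ((j+1)+l)) r := by
      refine Finset.sum_congr rfl fun l _ => Finset.sum_congr rfl fun r _ => ?_
      rw [cc_shift, show j+(l+1) = (j+1)+l from by omega]
    have e6 : ∑ r, cc N A B Bd ξ η (k+1) 0 r * Sum.elim (ud (j+0)) (dd (j+0)) r
        = (∑ r, Matrix.vecMul v B r * ud j r) + (∑ r, Matrix.vecMul v Bd r * dd j r) := by
      have e3 : ∀ r, cc N A B Bd ξ η (k+1) 0 r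
          = Matrix.vecMul v (Matrix.fromCols B Bd) r := by
        intro r
        rw [cc_lt (by omega)]
        have h0 : k + 1 - 1 - 0 = k := by omega
        rw [h0, ← Matrix.vecMul_vecMul]
      simp only [e3, Nat.add_zero]
      rw [Fintype.sum_sum_type]
      simp [Matrix.vecMul_fromCols]
    rw [e5, e6]
    linarith [h1]

/-- Fundamental Lemma (one direction): if `(u_d, d_d, y_d)` is a length-`T` trajectory of a
controllable LTI system of order `n` and `col(u_d, d_d)` is persistently exciting of order
`N + n`, then every length-`N` trajectory is a linear combination of the columns of the
stacked Hankel matrices of the data. -/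
theorem fundamental_lemma
    {n m q p : ℕ} (A : Matrix (Fin n) (Fin n) ℝ) (B : Matrix (Fin n) (Fin m) ℝ)
    (Bd : Matrix (Fin n) (Fin q) ℝ) (C : Matrix (Fin p) (Fin n) ℝ)
    (D : Matrix (Fin p) (Fin m) ℝ)
    (T N : ℕ) (hNT : N ≤ T)
    (ud : ℕ → Fin m → ℝ) (dd : ℕ → Fin q → ℝ) (yd : ℕ → Fin p → ℝ)
    (hdata : IsTraj A B Bd C D T ud dd yd)
    (hctrb : (Matrix.of (fun (i : Fin n) (kj : Fin n × (Fin m ⊕ Fin q)) =>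
        (A ^ (kj.1 : ℕ) * Matrix.fromCols B Bd) i kj.2)).rank = n)
    (hPE : (Hankel (fun t => Sum.elim (ud t) (dd t)) (N + n) (T - (N + n) + 1)).rank
        = Fintype.card (Fin (N + n) × (Fin m ⊕ Fin q))) :
    ∀ (u : ℕ → Fin m → ℝ) (d : ℕ → Fin q → ℝ) (y : ℕ → Fin p → ℝ),
      IsTraj A B Bd C D N u d y →
      ∃ g : Fin (T - N + 1) → ℝ,
        ((Hankel ud N (T - N + 1)).mulVec g = fun ir => u ir.1 ir.2) ∧
        ((Hankel dd N (T - N + 1)).mulVec g = fun ir => d ir.1 ir.2) ∧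
        ((Hankel yd N (T - N + 1)).mulVec g = fun ir => y ir.1 ir.2) := by
  intro u d y hu
  obtain ⟨x, hx, hy⟩ := hu
  obtain ⟨xd, hxd, hyd⟩ := hdata
  rcases Nat.eq_zero_or_pos N with hN0 | hNpos
  · subst hN0
    exact ⟨0, by funext ir; exact absurd ir.1.isLt (by omega),
      by funext ir; exact absurd ir.1.isLt (by omega),
      by funext ir; exact absurd ir.1.isLt (by omega)⟩
  -- T is long enough
  have hT : N + n ≤ T := by
    have h1 := Matrix.rank_le_card_width (Matrix.of (fun (i : Fin n) (kj : Fin n × (Fin m ⊕ Fin q)) =>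
        (A ^ (kj.1 : ℕ) * Matrix.fromCols B Bd) i kj.2))
    rw [hctrb] at h1
    simp only [Fintype.card_prod, Fintype.card_sum, Fintype.card_fin] at h1
    have h2 := Matrix.rank_le_card_width (Hankel (fun t => Sum.elim (ud t) (dd t)) (N + n) (T - (N + n) + 1))
    rw [hPE] at h2
    simp only [Fintype.card_prod, Fintype.card_sum, Fintype.card_fin] at h2
    rcases Nat.eq_zero_or_pos (m + q) with h0 | h0
    · rw [h0, Nat.mul_zero] at h1
      omega
    · have h3 : N + n ≤ (N + n) * (m + q) := Nat.le_mul_of_pos_right _ h0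
      have h4 : N + n ≤ T - (N + n) + 1 := le_trans h3 h2
      omega
  set w : ℕ → (Fin m ⊕ Fin q) → ℝ := fun t => Sum.elim (ud t) (dd t) with hw
  set Θ : Matrix ((Fin n) ⊕ (Fin N × (Fin m ⊕ Fin q))) (Fin (T - N + 1)) ℝ :=
    Matrix.fromRows (Matrix.of fun i (j : Fin (T - N + 1)) => xd j i) (Hankel w N (T - N + 1)) with hΘ
  have hker : ∀ ζ : (Fin n ⊕ (Fin N × (Fin m ⊕ Fin q))) → ℝ, Matrix.vecMul ζ Θ = 0 → ζ = 0 := by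
    intro ζ hζ
    set ξ : Fin n → ℝ := fun i => ζ (Sum.inl i) with hξdef
    set η : Fin N × (Fin m ⊕ Fin q) → ℝ := fun lr => ζ (Sum.inr lr) with hηdef
    have hcol : ∀ j, j + N ≤ T →
        (∑ i, ξ i * xd j i) + ∑ l ∈ Finset.range N, ∑ r,
          cc N A B Bd ξ η 0 l r * Sum.elim (ud (j+l)) (dd (j+l)) r = 0 := by
      intro j hj
      have hc := congrFun hζ ⟨j, by omega⟩
      simp only [Matrix.vecMul, dotProduct, Fintype.sum_sum_type, hΘ, Matrix.fromRows_apply_inl, Matrix.fromRows_apply_inr,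
        Matrix.of_apply, Sum.elim_inl, Sum.elim_inr, Hankel, Pi.zero_apply] at hc
      have e : (∑ l ∈ Finset.range N, ∑ r,
          cc N A B Bd ξ η 0 l r * Sum.elim (ud (j+l)) (dd (j+l)) r)
          = ∑ b : Fin N × (Fin m ⊕ Fin q), η b * w (b.1.1 + j) b.2 := by
        rw [Fintype.sum_prod_type, ← Fin.sum_univ_eq_sum_range (fun l => ∑ r,
          cc N A B Bd ξ η 0 l r * Sum.elim (ud (j+l)) (dd (j+l)) r) N]
        refine Finset.sum_congr rfl fun l _ => Finset.sum_congr rfl fun r _ => ?_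
        have h2 : (l.1 : ℕ) - 0 < N := by have := l.isLt; omega
        rw [cc_mid (by omega) h2]
        have hb : (⟨l.1 - 0, h2⟩ : Fin N) = l := by
          apply Fin.ext; simp
        rw [hb]
        simp only [hw, show l.1 + j = j + l.1 from by omega]
      rw [e]
      convert hc using 2
    have hGall := keyG (A := A) (B := B) (Bd := Bd) (ξ := ξ) (η := η)
      ud dd xd hNpos hxd hcol
    have hdeg : A.charpoly.natDegree = n := by
      rw [Matrix.charpoly_natDegree_eq_dim, Fintype.card_fin]
    have hαn : A.charpoly.coeff n = 1 := by
      have h := (Matrix.charpoly_monic A).coeff_natDegree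
      rwa [hdeg] at h
    have hCH : ∑ k ∈ Finset.range (n+1), A.charpoly.coeff k • A ^ k = 0 := by
      have h := Matrix.aeval_self_charpoly A
      rw [Polynomial.aeval_eq_sum_range, hdeg] at h
      exact h
    have hξA : ∀ i, ∑ k ∈ Finset.range (n+1),
        A.charpoly.coeff k * Matrix.vecMul ξ (A ^ k) i = 0 := by
      intro i
      have h0 : ∀ i' : Fin n,
          (∑ k ∈ Finset.range (n+1), A.charpoly.coeff k * (A ^ k) i' i) = 0 := by
        intro i'
        have h := congrFun (congrFun hCH i') i
        simpa [Matrix.sum_apply, smul_eq_mul] using h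
      simp only [Matrix.vecMul, dotProduct, Finset.mul_sum]
      rw [Finset.sum_comm]
      refine Finset.sum_eq_zero fun i' _ => ?_
      have e : ∀ k, A.charpoly.coeff k * (ξ i' * (A^k) i' i)
          = ξ i' * (A.charpoly.coeff k * (A^k) i' i) := fun k => by ring
      rw [Finset.sum_congr rfl (fun k _ => e k), ← Finset.mul_sum, h0 i', mul_zero]
    -- the combined row vector kills the deep Hankel matrix
    have hγ : ∀ (l : Fin (N + n)) (r),
        (∑ k ∈ Finset.range (n+1), A.charpoly.coeff k * cc N A B Bd ξ η k l.1 r) = 0 := by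
      have hγker : Matrix.vecMul (fun lr : Fin (N+n) × (Fin m ⊕ Fin q) =>
          ∑ k ∈ Finset.range (n+1), A.charpoly.coeff k * cc N A B Bd ξ η k lr.1.1 lr.2)
          (Hankel w (N+n) (T - (N+n) + 1)) = 0 := by
        funext j
        have hinner : ∀ k, k ≤ n →
            (∑ l : Fin (N+n), ∑ r, cc N A B Bd ξ η k l.1 r * w (j.1 + l.1) r)
            = - ∑ i, Matrix.vecMul ξ (A^k) i * xd j.1 i := by
          intro k hk
          have h1 := hGall k j.1 (by have := j.isLt; omega)
          have e1 : (∑ l : Fin (N+n), ∑ r, cc N A B Bd ξ η k l.1 r * w (j.1 + l.1) r)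
              = ∑ l ∈ Finset.range (N+n), ∑ r, cc N A B Bd ξ η k l r * w (j.1 + l) r := by
            rw [← Fin.sum_univ_eq_sum_range (fun l => ∑ r,
              cc N A B Bd ξ η k l r * w (j.1 + l) r) (N+n)]
          have e2 : (∑ l ∈ Finset.range (N+n), ∑ r, cc N A B Bd ξ η k l r * w (j.1 + l) r)
              = ∑ l ∈ Finset.range (N+k), ∑ r, cc N A B Bd ξ η k l r * w (j.1 + l) r := by
            symm
            apply Finset.sum_subset (by apply Finset.range_subset_range.mpr; omega)
            intro l _ hl
            rw [Finset.mem_range, not_lt] at hl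
            exact Finset.sum_eq_zero fun r _ => by rw [cc_ge hl, zero_mul]
          rw [e1, e2]
          simp only [hw]
          linarith [h1]
        show (∑ lr : Fin (N+n) × (Fin m ⊕ Fin q),
            (∑ k ∈ Finset.range (n+1), A.charpoly.coeff k * cc N A B Bd ξ η k lr.1.1 lr.2)
              * w (lr.1.1 + j.1) lr.2) = 0
        have estep : (∑ lr : Fin (N+n) × (Fin m ⊕ Fin q),
            (∑ k ∈ Finset.range (n+1), A.charpoly.coeff k * cc N A B Bd ξ η k lr.1.1 lr.2)
              * w (lr.1.1 + j.1) lr.2)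
            = ∑ k ∈ Finset.range (n+1), A.charpoly.coeff k *
                ∑ l : Fin (N+n), ∑ r, cc N A B Bd ξ η k l.1 r * w (j.1 + l.1) r := by
          simp only [Finset.sum_mul]
          rw [Finset.sum_comm]
          refine Finset.sum_congr rfl fun k _ => ?_
          rw [Finset.mul_sum, Fintype.sum_prod_type]
          refine Finset.sum_congr rfl fun l _ => ?_
          rw [Finset.mul_sum]
          refine Finset.sum_congr rfl fun r _ => ?_
          rw [show l.1 + j.1 = j.1 + l.1 from by omega]
          ring
        rw [estep]
        have : ∀ k ∈ Finset.range (n+1), A.charpoly.coeff k *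
            (∑ l : Fin (N+n), ∑ r, cc N A B Bd ξ η k l.1 r * w (j.1 + l.1) r)
            = - (A.charpoly.coeff k * ∑ i, Matrix.vecMul ξ (A^k) i * xd j.1 i) := by
          intro k hk
          rw [hinner k (by rw [Finset.mem_range] at hk; omega)]
          ring
        rw [Finset.sum_congr rfl this, Finset.sum_neg_distrib]
        have efin : (∑ k ∈ Finset.range (n+1),
            A.charpoly.coeff k * ∑ i, Matrix.vecMul ξ (A^k) i * xd j.1 i) = 0 := by
          simp only [Finset.mul_sum]
          rw [Finset.sum_comm]
          refine Finset.sum_eq_zero fun i _ => ?_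
          have e : ∀ k, A.charpoly.coeff k * (Matrix.vecMul ξ (A^k) i * xd j.1 i)
              = (A.charpoly.coeff k * Matrix.vecMul ξ (A^k) i) * xd j.1 i := fun k => by ring
          rw [Finset.sum_congr rfl (fun k _ => e k), ← Finset.sum_mul, hξA i, zero_mul]
        rw [efin, neg_zero]
      have h := left_ker_zero _ hPE _ hγker
      intro l r
      exact congrFun h (l, r)
    -- η = 0
    have hη : ∀ (l' : Fin N) (r), η (l', r) = 0 := by
      suffices hkey : ∀ s, ∀ l' : Fin N, N ≤ l'.1 + s → ∀ r, η (l', r) = 0 by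
        intro l' r; exact hkey N l' (by omega) r
      intro s
      induction s with
      | zero => intro l' h; exact absurd l'.isLt (by omega)
      | succ s IH =>
        intro l' h r
        have hl := hγ ⟨l'.1 + n, by omega⟩ r
        rw [Finset.sum_range_succ] at hl
        have hlast : cc N A B Bd ξ η n (l'.1 + n) r = η (l', r) := by
          have h2 : l'.1 + n - n < N := by have := l'.isLt; omega
          rw [cc_mid (by omega) h2]
          congr 1
          apply Prod.ext
          · apply Fin.ext; simp
          · rfl
        have hrest : ∀ k ∈ Finset.range n, A.charpoly.coeff k * cc N A B Bd ξ η k (l'.1 + n) r = 0 := by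
          intro k hk
          rw [Finset.mem_range] at hk
          rcases lt_or_ge (l'.1 + n - k) N with hlt | hge
          · rw [cc_mid (by omega) hlt]
            have hidx : N ≤ (l'.1 + n - k) + s := by omega
            rw [IH ⟨l'.1 + n - k, hlt⟩ hidx r, mul_zero]
          · rw [cc_ge (by omega) r, mul_zero]
        rw [Finset.sum_eq_zero hrest, hlast, hαn, one_mul, zero_add] at hl
        exact hl
    -- ξ kills the controllability matrix
    have hBexp : ∀ e, e < n → ∀ r,
        Matrix.vecMul ξ (A^e * Matrix.fromCols B Bd) r = 0 := by
      intro e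
      induction e using Nat.strong_induction_on with
      | _ e IH =>
        intro he r
        have hl := hγ ⟨n - 1 - e, by omega⟩ r
        rw [Finset.sum_range_succ] at hl
        have hlast : cc N A B Bd ξ η n (n - 1 - e) r
            = Matrix.vecMul ξ (A^e * Matrix.fromCols B Bd) r := by
          rw [cc_lt (by omega)]
          have hexp : n - 1 - (n - 1 - e) = e := by omega
          rw [hexp]
        have hrest : ∀ k ∈ Finset.range n,
            A.charpoly.coeff k * cc N A B Bd ξ η k (n - 1 - e) r = 0 := by
          intro k hk
          rw [Finset.mem_range] at hk
          rcases lt_or_ge (n - 1 - e) k with hlt | hge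
          · rw [cc_lt hlt]
            have he1 : k - 1 - (n - 1 - e) < e := by omega
            have he2 : k - 1 - (n - 1 - e) < n := by omega
            rw [IH _ he1 he2 r, mul_zero]
          · rcases lt_or_ge ((n - 1 - e) - k) N with h2 | h2
            · rw [cc_mid (by omega) h2, hη, mul_zero]
            · rw [cc_ge (by omega) r, mul_zero]
        rw [Finset.sum_eq_zero hrest, hαn, one_mul, zero_add, hlast] at hl
        exact hl
    have hξ0 : ξ = 0 := by
      apply left_ker_zero (Matrix.of (fun (i : Fin n) (kj : Fin n × (Fin m ⊕ Fin q)) =>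
        (A ^ (kj.1 : ℕ) * Matrix.fromCols B Bd) i kj.2)) (by simpa using hctrb)
      funext kr
      have h := hBexp kr.1.1 kr.1.isLt kr.2
      simpa [Matrix.vecMul, dotProduct, Matrix.of_apply] using h
    funext i
    cases i with
    | inl i => exact congrFun hξ0 i
    | inr lr => exact hη lr.1 lr.2
  obtain ⟨g, hg⟩ := surj_of_left_ker Θ hker
    (Sum.elim (x 0) (fun lr => Sum.elim (u lr.1) (d lr.1) lr.2))
  have hgtop : ∀ i, ∑ j : Fin (T - N + 1), xd j i * g j = x 0 i := by
    intro i
    have h := congrFun hg (Sum.inl i)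
    simpa [Matrix.mulVec, dotProduct, hΘ, Matrix.fromRows_apply_inl] using h
  have hgu : ∀ (t : ℕ) (ht : t < N) (r : Fin m), (∑ j : Fin (T - N + 1), ud (t + j) r * g j) = u t r := by
    intro t ht r
    have h := congrFun hg (Sum.inr (⟨t, ht⟩, Sum.inl r))
    simpa [Matrix.mulVec, dotProduct, hΘ, Matrix.fromRows_apply_inr, Hankel, hw] using h
  have hgd : ∀ (t : ℕ) (ht : t < N) (r : Fin q), (∑ j : Fin (T - N + 1), dd (t + j) r * g j) = d t r := by
    intro t ht r
    have h := congrFun hg (Sum.inr (⟨t, ht⟩, Sum.inr r))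
    simpa [Matrix.mulVec, dotProduct, hΘ, Matrix.fromRows_apply_inr, Hankel, hw] using h
  have hueq : (Hankel ud N (T - N + 1)).mulVec g = fun ir => u ir.1 ir.2 := by
    funext ir
    obtain ⟨l, r⟩ := ir
    simpa [Matrix.mulVec, dotProduct, Hankel] using hgu l.1 l.isLt r
  have hdeq : (Hankel dd N (T - N + 1)).mulVec g = fun ir => d ir.1 ir.2 := by
    funext ir
    obtain ⟨l, r⟩ := ir
    simpa [Matrix.mulVec, dotProduct, Hankel] using hgd l.1 l.isLt r
  have hxhat : ∀ t, t < N → ∀ i, (∑ j : Fin (T - N + 1), xd (t + j) i * g j) = x t i := by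
    intro t
    induction t with
    | zero => intro _ i; simpa using hgtop i
    | succ t IH =>
      intro ht i
      have ht' : t < N := by omega
      have hstep : ∀ j : Fin (T - N + 1), xd (t + 1 + j.1)
          = A.mulVec (xd (t + j.1)) + B.mulVec (ud (t + j.1)) + Bd.mulVec (dd (t + j.1)) := by
        intro j
        have hlt : t + j.1 + 1 < T := by have := j.isLt; omega
        have h2 := hxd (t + j.1) hlt
        rw [show t + 1 + j.1 = t + j.1 + 1 from by omega]
        exact h2
      have e0 : (∑ j : Fin (T - N + 1), xd (t + 1 + ↑j) i * g j)
          = ∑ j : Fin (T - N + 1), (A.mulVec (xd (t + ↑j)) + B.mulVec (ud (t + ↑j)) + Bd.mulVec (dd (t + ↑j))) i * g j :=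
        Finset.sum_congr rfl fun j _ => by rw [hstep j]
      rw [e0]
      simp only [Pi.add_apply, add_mul, Finset.sum_add_distrib]
      rw [mulVec_sum_comm A (fun j => xd (t + ↑j)) g i,
        mulVec_sum_comm B (fun j => ud (t + ↑j)) g i,
        mulVec_sum_comm Bd (fun j => dd (t + ↑j)) g i]
      have e1 : (fun i' => ∑ j : Fin (T - N + 1), xd (t + ↑j) i' * g j) = x t := funext fun i' => IH ht' i'
      have e2 : (fun r => ∑ j : Fin (T - N + 1), ud (t + ↑j) r * g j) = u t := funext fun r => hgu t ht' r
      have e3 : (fun r => ∑ j : Fin (T - N + 1), dd (t + ↑j) r * g j) = d t := funext fun r => hgd t ht' r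
      rw [e1, e2, e3, hx t ht]
      simp
  have hyeq : (Hankel yd N (T - N + 1)).mulVec g = fun ir => y ir.1 ir.2 := by
    funext ir
    obtain ⟨l, i⟩ := ir
    show ∑ j : Fin (T - N + 1), Hankel yd N (T - N + 1) (l, i) j * g j = y l.1 i
    have e0 : (∑ j : Fin (T - N + 1), Hankel yd N (T - N + 1) (l, i) j * g j)
        = ∑ j : Fin (T - N + 1), (C.mulVec (xd (l.1 + ↑j)) + D.mulVec (ud (l.1 + ↑j))) i * g j := by
      refine Finset.sum_congr rfl fun j _ => ?_
      have hlt : l.1 + j.1 < T := by have := j.isLt; have := l.isLt; omega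
      show yd (l.1 + ↑j) i * g j = _
      rw [hyd (l.1 + j.1) hlt]
    rw [e0]
    simp only [Pi.add_apply, add_mul, Finset.sum_add_distrib]
    rw [mulVec_sum_comm C (fun j => xd (l.1 + ↑j)) g i,
      mulVec_sum_comm D (fun j => ud (l.1 + ↑j)) g i]
    have e1 : (fun i' => ∑ j : Fin (T - N + 1), xd (l.1 + ↑j) i' * g j) = x l.1 :=
      funext fun i' => hxhat l.1 l.isLt i'
    have e2 : (fun r => ∑ j : Fin (T - N + 1), ud (l.1 + ↑j) r * g j) = u l.1 := funext fun r => hgu l.1 l.isLt r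
    rw [e1, e2, hy l.1 l.isLt]
    simp
  exact ⟨g, hueq, hdeq, hyeq⟩
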